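/- arXiv:2005.07912 — 4 statements merged into one kernel-verified Lean document; each statement's English description precedes it below -/
import Mathlib

section
/- Every strongly meager subset of 2^ω is meager. -/
open MeasureTheory
open ENNReal

namespace CantorSMZ

instance : TopologicalSpace (ZMod 2) := ⊥
instance : DiscreteTopology (ZMod 2) := ⟨rfl⟩
instance : MeasurableSpace (ZMod 2) := ⊤
instance : BorelSpace (ZMod 2) := ⟨borel_eq_top_of_discrete.symm⟩

/-- Cantor space `2^ω`, with coordinatewise addition mod 2 as group operation. -/
abbrev Cantor : Type := ℕ → ZMod 2

/-- The fair-coin product measure on `2^ω`: the normalized Haar measure on the compact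
group `2^ω` (this is exactly the product of the uniform measures on each coordinate). -/
noncomputable def Lb : Measure Cantor := Measure.addHaarMeasure ⊤

/-- The basic clopen set of all extensions of the finite binary string `s`. -/
def cyl (s : List (ZMod 2)) : Set Cantor := {x | ∀ i < s.length, x i = s.getD i 0}

/-- `X ⊆ 2^ω` has strong measure zero. -/
def SMZ (X : Set Cantor) : Prop :=
  ∀ f : ℕ → ℕ, ∃ σ : ℕ → List (ZMod 2), (∀ n, (σ n).length = f n) ∧ X ⊆ ⋃ n, cyl (σ n)

/-- `X ⊆ 2^ω` is strongly meager. -/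
def StronglyMeager (X : Set Cantor) : Prop :=
  ∀ N : Set Cantor, Lb N = 0 → ∃ t : Cantor, ((fun x => x + t) '' X) ∩ N = ∅

lemma zmod2_add_eq_zero_iff (u v : ZMod 2) : u + v = 0 ↔ u = v := by revert u v; decide

def CylM (z : Cantor) (a b : ℕ) : Set Cantor := {x | ∀ i, a ≤ i → i < b → x i = z i}

/-- Dense open set: somewhere past `k`, a long block matching `z`. -/
def DD (z : Cantor) (m : ℕ) : Set Cantor := ⋃ k, CylM z k (k + m + k + 1)

def NN (z : Cantor) : Set Cantor := ⋂ m, DD z m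

lemma isOpen_cylM (z : Cantor) (a b : ℕ) : IsOpen (CylM z a b) := by
  have : CylM z a b = ⋂ i ∈ Finset.Ico a b, (fun x : Cantor => x i) ⁻¹' {z i} := by
    ext x
    simp only [CylM, Set.mem_setOf_eq, Set.mem_iInter, Finset.mem_Ico, and_imp]
    tauto
  rw [this]
  exact isOpen_biInter_finset fun i _ =>
    (continuous_apply i).isOpen_preimage _ (isOpen_discrete _)

lemma dense_DD (z : Cantor) (m : ℕ) : Dense (DD z m) := by
  rw [dense_iff_inter_open]
  rintro U hU ⟨x, hx⟩
  obtain ⟨I, u, hIu, hsub⟩ := isOpen_pi_iff.1 hU x hx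
  set k := I.sup id + 1 with hk
  refine ⟨fun i => if i ∈ I then x i else z i, ?_, ?_⟩
  · apply hsub
    intro i hi
    simp only [Finset.mem_coe] at hi
    simp [hi, (hIu i hi).2]
  · refine Set.mem_iUnion.2 ⟨k, fun i h1 _ => ?_⟩
    have : i ∉ I := fun hiI => by
      have := Finset.le_sup (f := id) hiI
      simp only [id] at this; omega
    simp [this]

lemma nn_residual (z : Cantor) : NN z ∈ residual Cantor := by
  refine countable_iInter_mem.2 fun m => residual_of_dense_open ?_ (dense_DD z m)
  exact isOpen_iUnion fun k => isOpen_cylM z k _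

lemma measurableSet_cylM (z : Cantor) (a b : ℕ) : MeasurableSet (CylM z a b) := by
  have : CylM z a b = ⋂ i ∈ Finset.Ico a b, (fun x : Cantor => x i) ⁻¹' {z i} := by
    ext x
    simp only [CylM, Set.mem_setOf_eq, Set.mem_iInter, Finset.mem_Ico, and_imp]
    tauto
  rw [this]
  exact MeasurableSet.biInter (Finset.Ico a b).countable_toSet fun i _ =>
    (measurable_pi_apply i) (MeasurableSet.singleton _)

lemma lb_univ : Lb Set.univ = 1 := by
  unfold Lb
  have := MeasureTheory.Measure.addHaarMeasure_self
    (K₀ := (⊤ : TopologicalSpace.PositiveCompacts Cantor))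
  simpa using this

instance : Lb.IsAddLeftInvariant := by unfold Lb; infer_instance

lemma lb_cylM_le (a b : ℕ) : Lb (CylM 0 a b) ≤ 2⁻¹ ^ (b - a) := by
  set n := b - a with hn
  -- translates
  set T : (Fin n → ZMod 2) → Set Cantor := fun c =>
    {x | ∀ i, ∀ h1 : a ≤ i, ∀ h2 : i < b, x i = c ⟨i - a, by omega⟩} with hT
  set e : (Fin n → ZMod 2) → Cantor := fun c i =>
    if h : a ≤ i ∧ i < b then c ⟨i - a, by omega⟩ else 0 with he
  have hTc : ∀ c, T c = (fun x => e c + x) ⁻¹' (CylM 0 a b) := by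
    intro c
    ext x
    simp only [hT, he, Set.mem_setOf_eq, Set.mem_preimage, CylM, Pi.add_apply]
    constructor
    · intro h i h1 h2
      rw [h i h1 h2]
      simp only [dif_pos (And.intro h1 h2), Pi.zero_apply]
      exact (zmod2_add_eq_zero_iff _ _).2 rfl
    · intro h i h1 h2
      have := h i h1 h2
      simp only [dif_pos (And.intro h1 h2)] at this
      rw [add_comm] at this
      exact (zmod2_add_eq_zero_iff _ _).1 this
  have hmeas : ∀ c, MeasurableSet (T c) := by
    intro c
    rw [hTc c]
    exact (measurable_const_add (e c)) (measurableSet_cylM 0 a b)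
  have hμ : ∀ c, Lb (T c) = Lb (CylM 0 a b) := fun c => by
    rw [hTc c]; exact measure_preimage_add Lb (e c) _
  have hdisj : Pairwise (Function.onFun Disjoint T) := by
    intro c c' hcc
    rw [Function.onFun, Set.disjoint_left]
    intro x hxc hxc'
    apply hcc
    funext j
    have h1 : a ≤ a + (j : ℕ) := Nat.le_add_right _ _
    have h2 : a + (j : ℕ) < b := by have := j.2; omega
    have e1 := hxc (a + j) h1 h2
    have e2 := hxc' (a + j) h1 h2
    rw [e1] at e2
    have : (⟨a + (j:ℕ) - a, by omega⟩ : Fin n) = j := by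
      ext; simp
    rwa [this] at e2
  have key : (2:ℝ≥0∞) ^ n * Lb (CylM 0 a b) ≤ 1 := by
    have h1 : Lb (⋃ c, T c) = ∑' c, Lb (T c) := measure_iUnion hdisj hmeas
    have h2 : Lb (⋃ c, T c) ≤ 1 := lb_univ ▸ measure_mono (Set.subset_univ _)
    rw [h1] at h2
    calc (2:ℝ≥0∞) ^ n * Lb (CylM 0 a b)
        = ∑' _ : (Fin n → ZMod 2), Lb (CylM 0 a b) := by
          rw [tsum_fintype, Finset.sum_const, nsmul_eq_mul]
          congr 1
          simp [Fintype.card_fun]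
      _ = ∑' c, Lb (T c) := by simp_rw [hμ]
      _ ≤ 1 := h2
  calc Lb (CylM 0 a b) = (2⁻¹ : ℝ≥0∞) ^ n * ((2:ℝ≥0∞) ^ n * Lb (CylM 0 a b)) := by
        rw [← mul_assoc, ← mul_pow, ENNReal.inv_mul_cancel (by norm_num) (by norm_num),
          one_pow, one_mul]
    _ ≤ (2⁻¹ : ℝ≥0∞) ^ n * 1 := mul_le_mul_right key _
    _ = (2⁻¹ : ℝ≥0∞) ^ n := mul_one _

lemma lb_NN_zero : Lb (NN 0) = 0 := by
  have hm : ∀ m : ℕ, Lb (NN 0) ≤ 2⁻¹ ^ m * 2 := by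
    intro m
    have h1 : Lb (NN 0) ≤ Lb (DD 0 m) := measure_mono (Set.iInter_subset _ m)
    have h2 : Lb (DD 0 m) ≤ ∑' k : ℕ, Lb (CylM 0 k (k + m + k + 1)) := measure_iUnion_le _
    have h3 : ∀ k : ℕ, Lb (CylM 0 k (k + m + k + 1)) ≤ (2⁻¹ : ℝ≥0∞) ^ (m + k + 1) := by
      intro k
      have := lb_cylM_le k (k + m + k + 1)
      have harith : k + m + k + 1 - k = m + k + 1 := by omega
      rwa [harith] at this
    have h4 : (∑' k : ℕ, Lb (CylM 0 k (k + m + k + 1))) ≤ ∑' k : ℕ, (2⁻¹ : ℝ≥0∞) ^ (m + k + 1) :=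
      ENNReal.tsum_le_tsum h3
    have h5 : (∑' k : ℕ, (2⁻¹ : ℝ≥0∞) ^ (m + k + 1)) = 2⁻¹ ^ (m + 1) * (1 - 2⁻¹)⁻¹ := by
      have : ∀ k : ℕ, (2⁻¹ : ℝ≥0∞) ^ (m + k + 1) = 2⁻¹ ^ (m + 1) * 2⁻¹ ^ k := by
        intro k; rw [← pow_add]; ring_nf
      simp_rw [this]
      rw [ENNReal.tsum_mul_left, ENNReal.tsum_geometric]
    have h6 : ((1 : ℝ≥0∞) - 2⁻¹)⁻¹ = 2 := by
      rw [ENNReal.one_sub_inv_two, inv_inv]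
    calc Lb (NN 0) ≤ 2⁻¹ ^ (m + 1) * (1 - 2⁻¹)⁻¹ := le_trans h1 (le_trans h2 (h4.trans h5.le))
      _ = 2⁻¹ ^ (m + 1) * 2 := by rw [h6]
      _ = 2⁻¹ ^ m * (2⁻¹ * 2) := by rw [pow_succ]; ring
      _ ≤ 2⁻¹ ^ m * 2 := by
          apply mul_le_mul_right
          rw [ENNReal.inv_mul_cancel (by norm_num) (by norm_num)]
          norm_num
  have htend : Filter.Tendsto (fun m : ℕ => (2⁻¹ : ℝ≥0∞) ^ m * 2) Filter.atTop (nhds 0) := by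
    have h0 : Filter.Tendsto (fun m : ℕ => (2⁻¹ : ℝ≥0∞) ^ m) Filter.atTop (nhds 0) :=
      ENNReal.tendsto_pow_atTop_nhds_zero_of_lt_one (by norm_num)
    have := ENNReal.Tendsto.mul_const h0 (Or.inr (by norm_num : (2:ℝ≥0∞) ≠ ⊤))
    simpa using this
  have : Lb (NN 0) ≤ 0 := le_of_tendsto_of_tendsto' tendsto_const_nhds htend hm
  exact le_antisymm this zero_le

/-- Every strongly meager subset of `2^ω` is meager. -/
theorem stronglyMeager_isMeagre (X : Set Cantor) (hX : StronglyMeager X) : IsMeagre X := by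
  obtain ⟨t, ht⟩ := hX (NN 0) lb_NN_zero
  have hsub : X ⊆ (NN t)ᶜ := by
    intro x hx hxN
    have hmem : x + t ∈ ((fun x => x + t) '' X) := ⟨x, hx, rfl⟩
    have hxtN : x + t ∈ NN 0 := by
      intro S hS
      simp only [Set.mem_range] at hS
      obtain ⟨m, rfl⟩ := hS
      have := hxN (DD t m) ⟨m, rfl⟩
      obtain ⟨S', hS', hxS'⟩ := this
      simp only [Set.mem_range] at hS'
      obtain ⟨k, rfl⟩ := hS'
      refine Set.mem_iUnion.2 ⟨k, fun i h1 h2 => ?_⟩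
      have := hxS' i h1 h2
      simp only [Pi.add_apply, Pi.zero_apply]
      rw [this]
      exact (zmod2_add_eq_zero_iff _ _).2 rfl
    have : x + t ∈ ((fun x => x + t) '' X) ∩ NN 0 := ⟨hmem, hxtN⟩
    rw [ht] at this
    exact this
  apply IsMeagre.mono hsub
  unfold IsMeagre
  rw [compl_compl]
  exact nn_residual t

end CantorSMZ
end

section
/- If X ⊆ 2^ω has strong measure zero, then for every dense open set U ⊆ 2^ω there exists x ∈ 2^ω such that x + X ⊆ U. (Easy direction toward Galvin–Mycielski–Solovay for a single dense open set.) -/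
open MeasureTheory

namespace CantorSMZ

/-- Basic cylinders are open. -/
lemma isOpen_cyl (s : List (ZMod 2)) : IsOpen (cyl s) := by
  have h : cyl s = Set.pi (↑(Finset.range s.length)) (fun i => {s.getD i 0}) := by
    ext x; simp [cyl, Set.mem_pi]
  rw [h]
  exact isOpen_set_pi (Finset.range _).finite_toSet (fun a _ => isOpen_discrete _)

/-- Basic cylinders are nonempty. -/
lemma cyl_nonempty (s : List (ZMod 2)) : (cyl s).Nonempty :=
  ⟨fun i => s.getD i 0, fun _ _ => rfl⟩

/-- Any finite string has an extension whose cylinder lies inside a given dense open set. -/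
lemma exists_ext {U : Set Cantor} (hU : IsOpen U) (hUd : Dense U) (s : List (ZMod 2)) :
    ∃ t : List (ZMod 2), s.length ≤ t.length ∧ (∀ i < s.length, t.getD i 0 = s.getD i 0) ∧
      cyl t ⊆ U := by
  obtain ⟨z, hzc, hzU⟩ := hUd.inter_open_nonempty (cyl s) (isOpen_cyl s) (cyl_nonempty s)
  obtain ⟨I, u, hIu, hpi⟩ := isOpen_pi_iff.1 hU z hzU
  set N : ℕ := max s.length (I.sup (fun i => i) + 1) with hN
  refine ⟨List.ofFn (fun i : Fin N => z i), ?_, ?_, ?_⟩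
  · rw [List.length_ofFn, hN]; exact le_max_left _ _
  · intro i hi
    have hiN : i < N := lt_of_lt_of_le hi (le_max_left _ _)
    rw [List.getD_eq_getElem _ _ (by simpa using hiN)]
    simpa using hzc i hi
  · intro w hw
    refine hpi ?_
    intro a ha
    have haN : a < N := lt_of_lt_of_le (Nat.lt_succ_of_le (Finset.le_sup (f := fun i => i) ha))
      (le_max_right _ _)
    have := hw a (by simpa using haN)
    rw [List.getD_eq_getElem _ _ (by simpa using haN)] at this
    simp only [List.getElem_ofFn] at this
    rw [this]
    exact (hIu a ha).2

/-- A uniform-length version of `exists_ext` over all strings of a fixed length. -/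
lemma exists_uniform {U : Set Cantor} (hU : IsOpen U) (hUd : Dense U) (n : ℕ) :
    ∃ m, n < m ∧ ∀ s : List (ZMod 2), s.length = n →
      ∃ t, t.length = m ∧ (∀ i < n, t.getD i 0 = s.getD i 0) ∧ cyl t ⊆ U := by
  choose t ht1 ht2 ht3 using exists_ext hU hUd (U := U)
  have hfin : {l : List (ZMod 2) | l.length = n}.Finite := List.finite_length_eq _ n
  set m := max (n + 1) (hfin.toFinset.sup fun s => (t s).length) with hm
  refine ⟨m, lt_of_lt_of_le (Nat.lt_succ_self n) (le_max_left _ _), fun s hs => ?_⟩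
  have hsm : (t s).length ≤ m :=
    le_trans (Finset.le_sup (f := fun s => (t s).length) (by simp [hfin, hs])) (le_max_right _ _)
  refine ⟨t s ++ List.replicate (m - (t s).length) 0, ?_, ?_, ?_⟩
  · simp [Nat.add_sub_cancel' hsm]
  · intro i hi
    have hit : i < (t s).length := lt_of_lt_of_le (hs ▸ hi) (ht1 s)
    rw [List.getD_append _ _ _ _ hit]
    exact (hs ▸ ht2 s) i hi
  · refine subset_trans ?_ (ht3 s)
    intro w hw i hi
    have h2 : i < (t s ++ List.replicate (m - (t s).length) 0).length := by
      simp only [List.length_append]; omega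
    rw [hw i h2, List.getD_append _ _ _ _ hi]

/-- The sequence of cut points `n_0 = 0 < n_1 < n_2 < ⋯`. -/
def nseq (m : ℕ → ℕ) : ℕ → ℕ
  | 0 => 0
  | k + 1 => m (nseq m k)

/-- Finite approximations to the translating point `x`. -/
def stage (m : ℕ → ℕ) (T : ℕ → List (ZMod 2) → List (ZMod 2)) (σ : ℕ → List (ZMod 2)) :
    ℕ → List (ZMod 2)
  | 0 => []
  | k + 1 =>
    List.ofFn (fun i : Fin (m (nseq m k)) =>
      if (i : ℕ) < nseq m k then (stage m T σ k).getD i 0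
      else (T (nseq m k)
        (List.ofFn (fun j : Fin (nseq m k) =>
          (stage m T σ k).getD j 0 + (σ k).getD j 0))).getD i 0 + (σ k).getD i 0)

lemma stage_length (m T σ k) : (stage m T σ k).length = nseq m k := by
  cases k with
  | zero => rfl
  | succ k => simp [stage, nseq]

lemma stage_getD (m T σ k) {i : ℕ} (hi : i < nseq m (k + 1)) :
    (stage m T σ (k + 1)).getD i 0 =
      if i < nseq m k then (stage m T σ k).getD i 0
      else (T (nseq m k)
        (List.ofFn (fun j : Fin (nseq m k) =>
          (stage m T σ k).getD j 0 + (σ k).getD j 0))).getD i 0 + (σ k).getD i 0 := by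
  have hi' : i < (stage m T σ (k + 1)).length := by rw [stage_length]; exact hi
  rw [List.getD_eq_getElem _ _ hi']
  simp [stage]

/-- If `X` has strong measure zero then for every dense open `U ⊆ 2^ω` there is `x` with
`x + X ⊆ U`. -/
theorem smz_translate_into_dense_open (X : Set Cantor) (hX : SMZ X)
    (U : Set Cantor) (hU : IsOpen U) (hUd : Dense U) :
    ∃ x : Cantor, (fun y => x + y) '' X ⊆ U := by
  classical
  choose m hm1 hm2 using exists_uniform hU hUd
  have key2 : ∀ n (s : List (ZMod 2)), ∃ t, s.length = n →
      t.length = m n ∧ (∀ i < n, t.getD i 0 = s.getD i 0) ∧ cyl t ⊆ U := by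
    intro n s
    by_cases h : s.length = n
    · exact (hm2 n s h).imp fun t ht _ => ht
    · exact ⟨[], fun h' => absurd h' h⟩
  choose T hT using key2
  obtain ⟨σ, hσlen, hσcov⟩ := hX (fun k => nseq m (k + 1))
  have hmono : StrictMono (nseq m) := strictMono_nat_of_lt_succ (fun k => hm1 (nseq m k))
  have hge : ∀ k, k ≤ nseq m k := fun k => hmono.le_apply
  -- the chosen extension at stage k
  have hskl : ∀ k, (List.ofFn (fun j : Fin (nseq m k) =>
      (stage m T σ k).getD j 0 + (σ k).getD j 0)).length = nseq m k :=
    fun k => List.length_ofFn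
  have hTk := fun k => hT (nseq m k)
    (List.ofFn (fun j : Fin (nseq m k) => (stage m T σ k).getD j 0 + (σ k).getD j 0)) (hskl k)
  -- coherence of the stages
  have hcoh1 : ∀ k i, i < nseq m k →
      (stage m T σ (k + 1)).getD i 0 = (stage m T σ k).getD i 0 := by
    intro k i hi
    rw [stage_getD m T σ k (hi.trans (hmono (Nat.lt_succ_self k)))]
    rw [if_pos hi]
  have hcoh : ∀ k l, k ≤ l → ∀ i, i < nseq m k →
      (stage m T σ l).getD i 0 = (stage m T σ k).getD i 0 := by
    intro k l hkl
    induction l, hkl using Nat.le_induction with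
    | base => intro i _; rfl
    | succ l hkl ih =>
      intro i hi
      rw [hcoh1 l i (lt_of_lt_of_le hi (hmono.monotone hkl)), ih i hi]
  -- the translating point
  refine ⟨fun i => (stage m T σ (i + 1)).getD i 0, ?_⟩
  rintro _ ⟨y, hyX, rfl⟩
  obtain ⟨k, hk⟩ := Set.mem_iUnion.1 (hσcov hyX)
  -- x + y lies in the cylinder of the chosen extension at stage k, which is inside U
  refine (hTk k).2.2 ?_
  intro i hi
  rw [(hTk k).1] at hi
  -- now hi : i < m (nseq m k) = nseq m (k+1)
  have hi' : i < nseq m (k + 1) := hi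
  have hyi : y i = (σ k).getD i 0 := hk i (by rw [hσlen k]; exact hi')
  have hii : i < nseq m (i + 1) := lt_of_lt_of_le (Nat.lt_succ_self i) (hge (i + 1))
  have hxi : (stage m T σ (i + 1)).getD i 0 = (stage m T σ (k + 1)).getD i 0 := by
    rcases le_total (i + 1) (k + 1) with h | h
    · exact (hcoh (i + 1) (k + 1) h i hii).symm
    · exact hcoh (k + 1) (i + 1) h i hi'
  show (stage m T σ (i + 1)).getD i 0 + y i = _
  rw [hxi, hyi, stage_getD m T σ k hi']
  by_cases hik : i < nseq m k
  · rw [if_pos hik]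
    have hext := (hTk k).2.1 i hik
    have hofn : (List.ofFn fun j : Fin (nseq m k) =>
        (stage m T σ k).getD j 0 + (σ k).getD j 0).getD i 0 =
        (stage m T σ k).getD i 0 + (σ k).getD i 0 := by
      rw [List.getD_eq_getElem _ _ (by simpa using hik)]
      simp
    rw [hext, hofn]
  · rw [if_neg hik]
    have h2 : ∀ a b : ZMod 2, a + b + b = a := by decide
    exact h2 _ _

end CantorSMZ
end

section
/- If for every meager set F ⊆ 2^ω there exists x ∈ 2^ω with (x + X) ∩ F = ∅, then X has strong measure zero. (One direction of the Galvin–Mycielski–Solovay theorem.) -/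
open MeasureTheory

namespace CantorSMZ

/-- stage data -/
def KP (f : ℕ → ℕ) : ℕ → ℕ × ℕ
  | 0 => (0, 0)
  | n+1 =>
    let k := (KP f n).1; let p := (KP f n).2
    (max k ((Finset.Ico p (p + 2^k)).sup f), p + 2^k)

def Kf (f : ℕ → ℕ) (n : ℕ) : ℕ := (KP f n).1
def Pf (f : ℕ → ℕ) (n : ℕ) : ℕ := (KP f n).2

lemma Kf_zero (f) : Kf f 0 = 0 := rfl
lemma Pf_zero (f) : Pf f 0 = 0 := rfl
lemma Pf_succ (f n) : Pf f (n+1) = Pf f n + 2^(Kf f n) := rfl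
lemma Kf_succ (f n) : Kf f (n+1) = max (Kf f n) ((Finset.Ico (Pf f n) (Pf f n + 2^(Kf f n))).sup f) := rfl

lemma Kf_le_succ (f n) : Kf f n ≤ Kf f (n+1) := by rw [Kf_succ]; exact le_max_left _ _

lemma f_le_Kf (f : ℕ → ℕ) {n m : ℕ} (h1 : Pf f n ≤ m) (h2 : m < Pf f (n+1)) :
    f m ≤ Kf f (n+1) := by
  rw [Kf_succ]
  exact le_max_of_le_right (Finset.le_sup (Finset.mem_Ico.2 ⟨h1, by rw [Pf_succ] at h2; exact h2⟩))

lemma Pf_lt_succ (f n) : Pf f n < Pf f (n+1) := by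
  rw [Pf_succ]; exact Nat.lt_add_of_pos_right (Nat.pow_pos (by norm_num))

lemma Pf_strictMono (f) : StrictMono (Pf f) := strictMono_nat_of_lt_succ (Pf_lt_succ f)

lemma stage_exists (f m) : ∃ n, m < Pf f (n+1) := by
  refine ⟨m, ?_⟩
  have : m + 1 ≤ Pf f (m + 1) := (Pf_strictMono f).le_apply
  omega

noncomputable def stg (f : ℕ → ℕ) (m : ℕ) : ℕ := Nat.find (stage_exists f m)

lemma stg_lt (f m) : m < Pf f (stg f m + 1) := Nat.find_spec (stage_exists f m)

lemma stg_le (f m) : Pf f (stg f m) ≤ m := by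
  rcases Nat.eq_zero_or_pos (stg f m) with h | h
  · rw [h, Pf_zero]; exact Nat.zero_le _
  · have h2 : ¬ m < Pf f (stg f m - 1 + 1) :=
      Nat.find_min (stage_exists f m) (show stg f m - 1 < stg f m by omega)
    push_neg at h2
    have e : stg f m - 1 + 1 = stg f m := by omega
    rwa [e] at h2

lemma stg_unique (f m n) (h1 : Pf f n ≤ m) (h2 : m < Pf f (n+1)) : stg f m = n := by
  by_contra hne
  rcases Nat.lt_or_ge (stg f m) n with hlt | hge
  · have : Pf f (stg f m + 1) ≤ Pf f n := (Pf_strictMono f).monotone (by omega)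
    have := stg_lt f m; omega
  · have hn : n < stg f m := by omega
    exact Nat.find_min (stage_exists f m) hn h2

/-- codes for strings of length k -/
noncomputable def enc (k : ℕ) : (Fin k → ZMod 2) ≃ Fin (2^k) :=
  Fintype.equivFinOfCardEq (by simp [Fintype.card_fun])

lemma decode_congr {k k' : ℕ} (hk : k = k') {v v' : ℕ} (hvv : v = v')
    (hv : v < 2^k) (hv' : v' < 2^k') {i : ℕ} (hi : i < k) (hi' : i < k') :
    (enc k).symm ⟨v, hv⟩ ⟨i, hi⟩ = (enc k').symm ⟨v', hv'⟩ ⟨i, hi'⟩ := by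
  subst hk; subst hvv; rfl

/-- the meager set -/
def Fset (f : ℕ → ℕ) : Set Cantor :=
  {z | ∀ n, ∃ i, Kf f n ≤ i ∧ i < Kf f (n+1) ∧ z i ≠ 0}

def Uset (f : ℕ → ℕ) (n : ℕ) : Set Cantor :=
  {z | ∀ i, Kf f n ≤ i → i < Kf f (n+1) → z i = 0}

lemma isOpen_Uset (f n) : IsOpen (Uset f n) := by
  have : Uset f n = ⋂ i ∈ Finset.Ico (Kf f n) (Kf f (n+1)), {z : Cantor | z i = 0} := by
    ext z
    simp only [Uset, Set.mem_setOf_eq, Set.mem_iInter, Finset.mem_Ico]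
    exact ⟨fun h i hi => h i hi.1 hi.2, fun h i h1 h2 => h i ⟨h1, h2⟩⟩
  rw [this]
  exact isOpen_biInter_finset fun i _ => by
    have h2 : {z : Cantor | z i = 0} = (fun z : Cantor => z i) ⁻¹' {0} := rfl
    rw [h2]
    exact (continuous_apply i).isOpen_preimage _ (isOpen_discrete _)

lemma compl_Fset (f) : (Fset f)ᶜ = ⋃ n, Uset f n := by
  ext z
  simp only [Fset, Uset, Set.mem_compl_iff, Set.mem_setOf_eq, Set.mem_iUnion]
  push_neg
  constructor
  · rintro ⟨n, hn⟩
    exact ⟨n, fun i h1 h2 => by by_contra hne; exact absurd (hn i h1) (by simp [h2, hne])⟩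
  · rintro ⟨n, hn⟩
    exact ⟨n, fun i h1 => by by_contra hc; push_neg at hc; exact hc.2 (hn i h1 hc.1)⟩

lemma dense_union_Uset (f) : Dense (⋃ n, Uset f n) := by
  by_cases hc : ∃ n, Kf f (n+1) ≤ Kf f n
  · obtain ⟨n, hn⟩ := hc
    have : Uset f n = Set.univ := by
      ext z; simp only [Uset, Set.mem_setOf_eq, Set.mem_univ, iff_true]
      intro i h1 h2; omega
    apply Dense.mono (Set.subset_iUnion _ n)
    rw [this]; exact dense_univ
  · push_neg at hc
    have hK : StrictMono (Kf f) := strictMono_nat_of_lt_succ hc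
    rw [dense_iff_inter_open]
    rintro V hV ⟨z, hz⟩
    obtain ⟨I, u, hIu, hsub⟩ := isOpen_pi_iff.1 hV z hz
    set n := I.sup id + 1 with hn
    classical
    set w : Cantor := fun i => if Kf f n ≤ i ∧ i < Kf f (n+1) then 0 else z i with hw
    refine ⟨w, ⟨hsub ?_, ?_⟩⟩
    · intro i hi
      have hi' : (i : ℕ) < Kf f n := by
        have h1 : i ≤ I.sup id := Finset.le_sup (f := id) hi
        have h2 : n ≤ Kf f n := hK.le_apply
        omega
      have : w i = z i := by simp [hw]; intro h1; omega
      rw [this]; exact (hIu i hi).2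
    · refine Set.mem_iUnion.2 ⟨n, fun i h1 h2 => ?_⟩
      simp [hw, h1, h2]

lemma isMeagre_Fset (f) : IsMeagre (Fset f) := by
  rw [IsMeagre, compl_Fset]
  exact residual_of_dense_open (isOpen_iUnion (isOpen_Uset f)) (dense_union_Uset f)

theorem gms_hard_direction' (X : Set Cantor)
    (h : ∀ F : Set Cantor, IsMeagre F → ∃ x : Cantor, ((fun y => x + y) '' X) ∩ F = ∅) :
    ∀ f : ℕ → ℕ, ∃ σ : ℕ → List (ZMod 2), (∀ n, (σ n).length = f n) ∧
      X ⊆ ⋃ n, {x : Cantor | ∀ i < (σ n).length, x i = (σ n).getD i 0} := by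
  intro f
  obtain ⟨x, hx⟩ := h (Fset f) (isMeagre_Fset f)
  have hsub : ∀ m, m - Pf f (stg f m) < 2 ^ Kf f (stg f m) := by
    intro m
    have h1 := stg_le f m
    have h2 := stg_lt f m
    rw [Pf_succ] at h2
    omega
  set σ : ℕ → List (ZMod 2) := fun m =>
    (List.ofFn (fun i : Fin (Kf f (stg f m + 1)) =>
      if hlt : (i : ℕ) < Kf f (stg f m) then
        (enc (Kf f (stg f m))).symm ⟨m - Pf f (stg f m), hsub m⟩ ⟨i, hlt⟩
      else x i)).take (f m) with hσ
  have hlen : ∀ m, (σ m).length = f m := by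
    intro m
    rw [hσ]
    simp only [List.length_take, List.length_ofFn]
    exact min_eq_left (f_le_Kf f (stg_le f m) (stg_lt f m))
  refine ⟨σ, hlen, ?_⟩
  intro y hy
  have hyF : x + y ∉ Fset f := by
    intro hmem
    have : x + y ∈ ((fun y => x + y) '' X) ∩ Fset f := ⟨⟨y, hy, rfl⟩, hmem⟩
    rw [hx] at this; exact this
  simp only [Fset, Set.mem_setOf_eq] at hyF
  push_neg at hyF
  obtain ⟨n, hn⟩ := hyF
  have hagree : ∀ i, Kf f n ≤ i → i < Kf f (n+1) → y i = x i := by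
    intro i h1 h2
    have h0 : x i + y i = 0 := hn i h1 h2
    have hkey : ∀ a b : ZMod 2, a + b = 0 → b = a := by decide
    exact hkey _ _ h0
  -- the index
  set t : Fin (Kf f n) → ZMod 2 := fun i => y i with ht
  set m : ℕ := Pf f n + (enc (Kf f n) t : ℕ) with hm
  have hmlt : m < Pf f (n+1) := by
    rw [Pf_succ, hm]
    have := (enc (Kf f n) t).isLt
    omega
  have hmge : Pf f n ≤ m := by rw [hm]; omega
  have hstg : stg f m = n := stg_unique f m n hmge hmlt
  refine Set.mem_iUnion.2 ⟨m, ?_⟩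
  intro i hi
  rw [hlen m] at hi
  have hfK : f m ≤ Kf f (n+1) := f_le_Kf f hmge hmlt
  have hiK : i < Kf f (stg f m + 1) := by rw [hstg]; omega
  have hlen2 : i < (σ m).length := by rw [hlen m]; exact hi
  rw [List.getD_eq_getElem _ _ hlen2]
  have e1 : (σ m)[i]'hlen2 = if hlt : i < Kf f (stg f m) then
        (enc (Kf f (stg f m))).symm ⟨m - Pf f (stg f m), hsub m⟩ ⟨i, hlt⟩
      else x i := by
    simp only [hσ, List.getElem_take, List.getElem_ofFn]
  rw [e1]
  by_cases hlt : i < Kf f n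
  · have hlt' : i < Kf f (stg f m) := by rw [hstg]; exact hlt
    rw [dif_pos hlt']
    have hval : m - Pf f (stg f m) = ((enc (Kf f n)) t : ℕ) := by
      rw [hstg, hm]; omega
    rw [decode_congr (by rw [hstg]) hval (hsub m) ((enc (Kf f n) t).isLt) hlt' hlt]
    simp only [Fin.eta, Equiv.symm_apply_apply]
    rfl
  · rw [dif_neg (show ¬ i < Kf f (stg f m) by rw [hstg]; exact hlt)]
    exact hagree i (le_of_not_gt hlt) (by omega)


/-- Galvin–Mycielski–Solovay, one direction: if every meager set can be translated off
`X`, then `X` has strong measure zero. -/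
theorem gms_hard_direction (X : Set Cantor)
    (h : ∀ F : Set Cantor, IsMeagre F → ∃ x : Cantor, ((fun y => x + y) '' X) ∩ F = ∅) :
    SMZ X := gms_hard_direction' X h

end CantorSMZ
end

section
/- Let s_n, t_n ∈ 2^{<ω} with |s_n| = |t_n| and ∑_n 2^{−2|s_n|} < ∞, let f : ω → ω be strictly increasing satisfying conditions (a) and (b) as below, and let z ∈ 2^ω. Then the set { x ∈ 2^ω : (x, x_f + z) ∈ ⋂_m ⋃_{n ≥ m} [s_n] × [t_n] } has measure zero, where x_f(n) = x(f(n)) and + is coordinatewise addition mod 2. -/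
set_option maxHeartbeats 0


open MeasureTheory

namespace CantorSMZ

section Aux

lemma zmod2_cases : ∀ u v : ZMod 2, u = v ∨ u = v + 1 := by decide
lemma zmod2_ne : ∀ v : ZMod 2, v ≠ v + 1 := by decide

instance : Lb.IsAddHaarMeasure := Measure.isAddHaarMeasure_addHaarMeasure ⊤

/-- The set of `x` matching `w` on all coordinates in `F`. -/
def E (F : Finset ℕ) (w : Cantor) : Set Cantor := {x | ∀ i ∈ F, x i = w i}

lemma measurableSet_E (F : Finset ℕ) (w : Cantor) : MeasurableSet (E F w) := by
  have : E F w = ⋂ i ∈ F, {x : Cantor | x i = w i} := by ext x; simp [E]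
  rw [this]
  exact MeasurableSet.biInter F.countable_toSet
    (fun i _ => measurableSet_eq_fun (measurable_pi_apply i) measurable_const)

lemma Lb_E (F : Finset ℕ) (w : Cantor) : Lb (E F w) = 2⁻¹ ^ F.card := by
  induction F using Finset.induction with
  | empty =>
    have h : E ∅ w = Set.univ := by ext x; simp [E]
    rw [h]
    have := Measure.addHaarMeasure_self (K₀ := (⊤ : TopologicalSpace.PositiveCompacts Cantor))
    simpa [Lb] using this
  | @insert a F ha ih =>
    set δ : Cantor := fun i => if i = a then 1 else 0 with hδ
    set w' := Function.update w a (w a + 1) with hw'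
    have hwF : ∀ i ∈ F, w' i = w i := by
      intro i hi
      exact Function.update_of_ne (by rintro rfl; exact ha hi) _ w
    have h1 : (fun x => δ + x) ⁻¹' (E (insert a F) w') = E (insert a F) w := by
      ext x
      simp only [Set.mem_preimage, E, Set.mem_setOf_eq, Finset.forall_mem_insert, Pi.add_apply]
      constructor
      · rintro ⟨h1, h2⟩
        refine ⟨?_, fun i hi => ?_⟩
        · have : δ a = 1 := by simp [hδ]
          rw [this, hw', Function.update_self] at h1
          have := h1
          rw [add_comm] at this
          exact add_right_cancel this
        · have hne : i ≠ a := fun h => ha (h ▸ hi)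
          have : δ i = 0 := by simp [hδ, hne]
          have h2i := h2 i hi
          rw [this, zero_add, hwF i hi] at h2i
          exact h2i
      · rintro ⟨h1, h2⟩
        refine ⟨?_, fun i hi => ?_⟩
        · have : δ a = 1 := by simp [hδ]
          rw [this, hw', Function.update_self, h1, add_comm]
        · have hne : i ≠ a := fun h => ha (h ▸ hi)
          have : δ i = 0 := by simp [hδ, hne]
          rw [this, zero_add, hwF i hi]
          exact h2 i hi
    have h2 : E (insert a F) w ∪ E (insert a F) w' = E F w := by
      ext x
      simp only [Set.mem_union, E, Set.mem_setOf_eq, Finset.forall_mem_insert]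
      constructor
      · rintro (⟨_, h⟩ | ⟨_, h⟩) i hi
        · exact h i hi
        · rw [← hwF i hi]; exact h i hi
      · intro h
        rcases zmod2_cases (x a) (w a) with hc | hc
        · exact Or.inl ⟨hc, h⟩
        · refine Or.inr ⟨?_, fun i hi => (hwF i hi).symm ▸ h i hi⟩
          rw [hw', Function.update_self]; exact hc
    have h3 : Disjoint (E (insert a F) w) (E (insert a F) w') := by
      rw [Set.disjoint_left]
      intro x hx hx'
      have e1 : x a = w a := hx a (Finset.mem_insert_self a F)
      have e2 : x a = w' a := hx' a (Finset.mem_insert_self a F)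
      rw [hw', Function.update_self, ← e1] at e2
      exact zmod2_ne (x a) e2
    have heq : Lb (E (insert a F) w') = Lb (E (insert a F) w) := by
      rw [← h1]; exact (measure_preimage_add Lb δ _).symm
    have hsum : Lb (E (insert a F) w) + Lb (E (insert a F) w') = Lb (E F w) := by
      rw [← measure_union h3 (measurableSet_E _ _), h2]
    rw [heq, ih] at hsum
    have h2x : 2 * Lb (E (insert a F) w) = 2⁻¹ ^ F.card := by
      rw [two_mul]; exact hsum
    have : Lb (E (insert a F) w) = 2⁻¹ * (2⁻¹ ^ F.card) := by
      rw [← h2x, ← mul_assoc, ENNReal.inv_mul_cancel two_ne_zero ENNReal.ofNat_ne_top, one_mul]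
    rw [this, Finset.card_insert_of_notMem ha, pow_succ, mul_comm]

lemma ofReal_half_pow (k : ℕ) : ENNReal.ofReal (((1:ℝ)/2) ^ k) = (2⁻¹ : ENNReal) ^ k := by
  rw [ENNReal.ofReal_pow (by norm_num)]
  congr 1
  rw [one_div, ENNReal.ofReal_inv_of_pos (by norm_num)]
  norm_num

end Aux

/-- Under conditions (a) and (b), for every `z ∈ 2^ω` the set
`{x : (x, x_f + z) ∈ ⋂_m ⋃_{n ≥ m} [s_n] × [t_n]}` is null. -/
theorem limsup_null (s t : ℕ → List (ZMod 2)) (hst : ∀ n, (s n).length = (t n).length)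
    (hsum : Summable fun n => ((1 : ℝ) / 2) ^ (2 * (s n).length))
    (f : ℕ → ℕ) (hf : StrictMono f)
    (ha : ∀ n, ∀ j ≤ f n, (s j).length < f (n + 1))
    (hb : ∀ n, (∑' j : ℕ, if f n ≤ j then ((1 : ℝ) / 2) ^ (2 * (s j).length) else 0)
      ≤ ((1 : ℝ) / 2) ^ (2 * (s n).length) / 2 ^ (n + 2))
    (z : Cantor) :
    Lb {x : Cantor | ∀ m, ∃ n ≥ m,
        x ∈ cyl (s n) ∧ (fun k => x (f k) + z k) ∈ cyl (t n)} = 0 := by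
  classical
  set A : ℕ → Set Cantor :=
    fun n => {x | x ∈ cyl (s n) ∧ (fun k => x (f k) + z k) ∈ cyl (t n)} with hA
  -- the index function m(n) := least m with n ≤ f m
  have hex : ∀ n, ∃ m, n ≤ f m := fun n => ⟨n, hf.le_apply⟩
  set mf : ℕ → ℕ := fun n => Nat.find (hex n) with hmf
  have hmf1 : ∀ n, n ≤ f (mf n) := fun n => Nat.find_spec (hex n)
  have hmf2 : ∀ n m, m < mf n → f m < n := by
    intro n m hm
    have := Nat.find_min (hex n) hm
    omega
  -- coordinate data
  set K : ℕ → Finset ℕ :=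
    fun n => (Finset.range (s n).length).filter (fun k => (s n).length ≤ f k) with hK
  set Fn : ℕ → Finset ℕ := fun n => Finset.range (s n).length ∪ (K n).image f with hFn
  set w : ℕ → Cantor := fun n i =>
    if i < (s n).length then (s n).getD i 0
    else (t n).getD (Function.invFun f i) 0 - z (Function.invFun f i) with hw
  -- A n is contained in a cylinder on the coordinate set Fn n
  have hsub : ∀ n, A n ⊆ E (Fn n) (w n) := by
    intro n x hx i hi
    have hx1 : ∀ i < (s n).length, x i = (s n).getD i 0 := hx.1
    have hx2 : ∀ k < (t n).length, x (f k) + z k = (t n).getD k 0 := hx.2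
    rcases Finset.mem_union.mp hi with hir | him
    · have hilt : i < (s n).length := Finset.mem_range.mp hir
      simp only [hw, if_pos hilt]
      exact hx1 i hilt
    · obtain ⟨k, hkK, rfl⟩ := Finset.mem_image.mp him
      obtain ⟨hkr, hkf⟩ := Finset.mem_filter.mp hkK
      have hklt : k < (s n).length := Finset.mem_range.mp hkr
      have hnlt : ¬ f k < (s n).length := not_lt.mpr hkf
      have hinv : Function.invFun f (f k) = k :=
        Function.leftInverse_invFun hf.injective k
      simp only [hw, if_neg hnlt, hinv]
      exact eq_sub_of_add_eq (hx2 k (hst n ▸ hklt))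
  -- cardinality bound for Fn n
  have hcard : ∀ n, 2 * (s n).length ≤ (Fn n).card + (mf n + 1) := by
    intro n
    have h1 : Disjoint (Finset.range (s n).length) ((K n).image f) := by
      rw [Finset.disjoint_left]
      intro i hir him
      obtain ⟨k, hkK, rfl⟩ := Finset.mem_image.mp him
      obtain ⟨_, hkf⟩ := Finset.mem_filter.mp hkK
      exact absurd (Finset.mem_range.mp hir) (not_lt.mpr hkf)
    have h2 : ((K n).image f).card = (K n).card :=
      Finset.card_image_of_injective _ hf.injective
    have h3 : (K n).card +
        (((Finset.range (s n).length).filter (fun k => ¬ (s n).length ≤ f k)).card)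
        = (s n).length := by
      rw [hK]
      rw [Finset.card_filter_add_card_filter_not (fun k => (s n).length ≤ f k),
        Finset.card_range]
    have h4 : ((Finset.range (s n).length).filter (fun k => ¬ (s n).length ≤ f k))
        ⊆ Finset.range (mf n + 1) := by
      intro k hk
      obtain ⟨hkr, hkf⟩ := Finset.mem_filter.mp hk
      rw [Finset.mem_range]
      by_contra hc
      have hle : mf n + 1 ≤ k := by omega
      have : (s n).length < f (mf n + 1) := ha (mf n) n (hmf1 n)
      have : f (mf n + 1) ≤ f k := hf.monotone hle
      omega
    have h5 := Finset.card_le_card h4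
    rw [Finset.card_range] at h5
    have h6 : (Fn n).card = (s n).length + (K n).card := by
      rw [hFn]
      rw [Finset.card_union_of_disjoint h1, Finset.card_range, h2]
    omega
  -- the measure bound
  have hbound : ∀ n, Lb (A n) ≤ 2 ^ (mf n + 1) * 2⁻¹ ^ (2 * (s n).length) := by
    intro n
    have hmeas : Lb (A n) ≤ 2⁻¹ ^ (Fn n).card := by
      calc Lb (A n) ≤ Lb (E (Fn n) (w n)) := measure_mono (hsub n)
        _ = 2⁻¹ ^ (Fn n).card := Lb_E _ _
    have hone : (2 : ENNReal) ^ (mf n + 1) * 2⁻¹ ^ (mf n + 1) = 1 := by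
      rw [← mul_pow, ENNReal.mul_inv_cancel two_ne_zero ENNReal.ofNat_ne_top, one_pow]
    calc Lb (A n) ≤ 2⁻¹ ^ (Fn n).card := hmeas
      _ = 2 ^ (mf n + 1) * (2⁻¹ ^ (mf n + 1) * 2⁻¹ ^ (Fn n).card) := by
          rw [← mul_assoc, hone, one_mul]
      _ = 2 ^ (mf n + 1) * 2⁻¹ ^ ((mf n + 1) + (Fn n).card) := by rw [pow_add]; ring
      _ ≤ 2 ^ (mf n + 1) * 2⁻¹ ^ (2 * (s n).length) := by
          refine mul_le_mul_right ?_ _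
          refine pow_le_pow_of_le_one zero_le (by norm_num) ?_
          have := hcard n
          omega
  -- definitions for the summation
  set c : ℕ → ENNReal := fun n => 2 ^ (mf n + 1) * 2⁻¹ ^ (2 * (s n).length) with hc
  set r : ℕ → ℝ := fun n => ((1:ℝ)/2) ^ (2 * (s n).length) with hr
  have hrpos : ∀ n, 0 ≤ r n := fun n => by positivity
  have hrsum : Summable r := hsum
  have hcne : ∀ n, c n ≠ ⊤ := by
    intro n
    exact ENNReal.mul_ne_top (by exact ENNReal.pow_ne_top ENNReal.ofNat_ne_top)
      (ENNReal.pow_ne_top (by simp))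
  -- the key summability
  have htsum : ∑' n, Lb (A n) ≠ ⊤ := by
    refine ne_top_of_le_ne_top ?_ (ENNReal.tsum_le_tsum hbound)
    set g : ℕ → ℕ → ENNReal := fun m n => if mf n = m then c n else 0 with hg
    have hgc : ∀ n, ∑' m, g m n = c n := by
      intro n
      rw [tsum_eq_single (mf n) (fun m hm => by
        show (if mf n = m then c n else 0) = 0
        exact if_neg (fun h => hm h.symm))]
      show (if mf n = mf n then c n else 0) = c n
      rw [if_pos rfl]
    have hcomm : ∑' n, c n = ∑' m, ∑' n, g m n := by
      rw [← ENNReal.tsum_comm]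
      exact (tsum_congr hgc).symm
    set C₀ : ENNReal := ∑ n ∈ Finset.range (f 0 + 1), c n with hC₀
    have hC₀ne : C₀ ≠ ⊤ := by
      rw [hC₀]
      exact (ENNReal.sum_lt_top.mpr (fun n _ => lt_top_iff_ne_top.mpr (hcne n))).ne
    -- block 0
    have hblock0 : ∑' n, g 0 n ≤ C₀ := by
      have hle : ∀ n, g 0 n ≤ if n ∈ Finset.range (f 0 + 1) then c n else 0 := by
        intro n
        by_cases h : mf n = 0
        · have : n ≤ f 0 := h ▸ hmf1 n
          simp [hg, h, Finset.mem_range, Nat.lt_succ_of_le this]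
        · simp [hg, h]
      calc ∑' n, g 0 n ≤ ∑' n, if n ∈ Finset.range (f 0 + 1) then c n else 0 :=
            ENNReal.tsum_le_tsum hle
        _ = ∑ n ∈ Finset.range (f 0 + 1), if n ∈ Finset.range (f 0 + 1) then c n else 0 :=
            tsum_eq_sum (fun n hn => if_neg hn)
        _ ≤ C₀ := by
            rw [hC₀]
            exact Finset.sum_le_sum (fun n hn => by rw [if_pos hn])
    -- blocks m+1
    have hblockS : ∀ m, ∑' n, g (m+1) n ≤ ENNReal.ofReal (r m) := by
      intro m
      have step1 : ∀ n, g (m+1) n ≤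
          if f m ≤ n then 2 ^ (m+2) * 2⁻¹ ^ (2 * (s n).length) else 0 := by
        intro n
        by_cases h : mf n = m + 1
        · have hfm : f m < n := hmf2 n m (by omega)
          have e1 : g (m+1) n = c n := if_pos h
          have e2 : c n = 2 ^ (m+2) * 2⁻¹ ^ (2 * (s n).length) := by
            show 2 ^ (mf n + 1) * 2⁻¹ ^ (2 * (s n).length) = _
            rw [h]
          rw [e1, e2, if_pos hfm.le]
        · have e1 : g (m+1) n = 0 := if_neg h
          rw [e1]
          exact zero_le
      have step2 : (∑' n, if f m ≤ n then
            (2:ENNReal) ^ (m+2) * 2⁻¹ ^ (2 * (s n).length) else 0)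
          = 2 ^ (m+2) * ∑' n, (if f m ≤ n then (2⁻¹:ENNReal) ^ (2 * (s n).length) else 0) := by
        rw [← ENNReal.tsum_mul_left]
        exact tsum_congr (fun n => by split <;> simp
          )
      have hsummable : Summable (fun n => if f m ≤ n then r n else 0) := by
        have heq : (fun n => if f m ≤ n then r n else 0)
            = Set.indicator {n | f m ≤ n} r := by
          ext n
          simp [Set.indicator_apply]
        rw [heq]
        exact hrsum.indicator _
      have step3 : (∑' n, if f m ≤ n then (2⁻¹:ENNReal) ^ (2 * (s n).length) else 0)
          = ENNReal.ofReal (∑' n, if f m ≤ n then r n else 0) := by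
        rw [ENNReal.ofReal_tsum_of_nonneg (fun n => by positivity) hsummable]
        refine tsum_congr (fun n => ?_)
        split
        · rw [hr, ofReal_half_pow]
        · simp
      have step4 : ENNReal.ofReal (∑' n, if f m ≤ n then r n else 0)
          ≤ ENNReal.ofReal (r m / 2 ^ (m+2)) := by
        refine ENNReal.ofReal_le_ofReal ?_
        exact hb m
      have step5 : ENNReal.ofReal (r m / 2 ^ (m+2))
          = ENNReal.ofReal (r m) / 2 ^ (m+2) := by
        rw [ENNReal.ofReal_div_of_pos (by positivity)]
        congr 1
        rw [ENNReal.ofReal_pow (by norm_num)]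
        norm_num
      calc ∑' n, g (m+1) n
          ≤ ∑' n, if f m ≤ n then (2:ENNReal) ^ (m+2) * 2⁻¹ ^ (2 * (s n).length) else 0 :=
            ENNReal.tsum_le_tsum step1
        _ = 2 ^ (m+2) * ∑' n, (if f m ≤ n then (2⁻¹:ENNReal) ^ (2 * (s n).length) else 0) :=
            step2
        _ ≤ 2 ^ (m+2) * (ENNReal.ofReal (r m) / 2 ^ (m+2)) := by
            rw [step3]
            exact mul_le_mul_right (step5 ▸ step4) _
        _ = ENNReal.ofReal (r m) := by
            exact ENNReal.mul_div_cancel (by positivity) (ENNReal.pow_ne_top ENNReal.ofNat_ne_top)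
      -- end hblockS
    have hfinal : ∑' n, c n ≤ C₀ + ENNReal.ofReal (∑' m, r m) := by
      set B : ℕ → ENNReal := fun m => Nat.casesOn m C₀ (fun m' => ENNReal.ofReal (r m'))
        with hBdef
      have hB : ∀ m, (∑' n, g m n) ≤ B m := by
        intro m
        cases m with
        | zero => exact hblock0
        | succ m' => exact hblockS m'
      have h1 : ∑' m, ∑' n, g m n ≤ ∑' m, B m := ENNReal.tsum_le_tsum hB
      have h2 : ∑' m, B m = B 0 + ∑' m, B (m+1) := tsum_eq_zero_add' ENNReal.summable
      have h3 : (∑' m, B (m+1)) = ∑' m, ENNReal.ofReal (r m) := tsum_congr (fun m => rfl)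
      have h4 : (∑' m, ENNReal.ofReal (r m)) = ENNReal.ofReal (∑' m, r m) :=
        (ENNReal.ofReal_tsum_of_nonneg hrpos hrsum).symm
      rw [hcomm]
      refine h1.trans ?_
      rw [h2, h3, h4]
      exact le_of_eq rfl
    exact ne_top_of_le_ne_top
      (ENNReal.add_ne_top.mpr ⟨hC₀ne, ENNReal.ofReal_ne_top⟩) hfinal
  -- conclude by Borel--Cantelli
  have hS : {x : Cantor | ∀ m, ∃ n ≥ m,
      x ∈ cyl (s n) ∧ (fun k => x (f k) + z k) ∈ cyl (t n)}
      = Filter.limsup A Filter.atTop := by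
    ext x
    rw [Filter.mem_limsup_iff_frequently_mem, Filter.frequently_atTop]
    exact Iff.rfl
  rw [hS]
  exact measure_limsup_atTop_eq_zero htsum


end CantorSMZ
end
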